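/- The generating function of b₂ is 2/((1+t)(1−2t)); equivalently, in the ring of formal power series over ℤ, (1+t)·(1−2t)·Σ_{k≥0} b₂(k)·t^k = 2. -/

import Mathlib

open Polynomial

/-- `a₁ n` : number of nonzero coefficients of `(1+x+x²)ⁿ` over `𝔽₂`. -/
noncomputable def a1 (n : ℕ) : ℕ :=
  (((1 + X + X ^ 2 : (ZMod 2)[X]) ^ n).support).card

/-- `a₂ n` : number of nonzero coefficients of `(1+x)(1+x+x²)ⁿ` over `𝔽₂`. -/
noncomputable def a2 (n : ℕ) : ℕ :=
  (((1 + X) * (1 + X + X ^ 2 : (ZMod 2)[X]) ^ n).support).card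

namespace B2Aux

lemma emb_mk_apply {α β : Type*} (f : α → β) (i) (a : α) :
    (⟨f, i⟩ : α ↪ β) a = f a := rfl

lemma sq_eq_expand (g : (ZMod 2)[X]) : g ^ 2 = expand (ZMod 2) 2 g := by
  have h := Polynomial.map_frobenius_expand 2 g
  rw [ZMod.frobenius_zmod, Polynomial.map_id] at h
  exact h.symm

lemma support_expand (g : (ZMod 2)[X]) :
    (expand (ZMod 2) 2 g).support
      = g.support.map ⟨fun m => 2 * m, mul_right_injective₀ two_ne_zero⟩ := by
  ext n
  simp only [mem_support_iff, Finset.mem_map, Function.Embedding.coeFn_mk, emb_mk_apply,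
    Polynomial.coeff_expand (by norm_num : (0:ℕ) < 2)]
  constructor
  · intro h
    split_ifs at h with hd
    · exact ⟨n / 2, h, by omega⟩
    · exact absurd rfl h
  · rintro ⟨m, hm, rfl⟩
    rw [if_pos ⟨m, rfl⟩]
    simpa [Nat.mul_div_cancel_left] using hm

lemma support_X_pow_mul (c : ℕ) (g : (ZMod 2)[X]) :
    (X ^ c * g).support
      = g.support.map ⟨fun m => m + c, add_left_injective c⟩ := by
  ext n
  simp only [mem_support_iff, Finset.mem_map, Function.Embedding.coeFn_mk, emb_mk_apply,
    Polynomial.coeff_X_pow_mul']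
  constructor
  · intro h
    split_ifs at h with hd
    · exact ⟨n - c, h, by omega⟩
    · exact absurd rfl h
  · rintro ⟨m, hm, rfl⟩
    rw [if_pos (by omega)]
    simpa using hm

lemma support_add_disjoint {p q : (ZMod 2)[X]} (h : Disjoint p.support q.support) :
    (p + q).support = p.support ∪ q.support := by
  ext n
  simp only [mem_support_iff, coeff_add, Finset.mem_union]
  constructor
  · intro hn
    by_contra hc
    push_neg at hc
    exact hn (by rw [hc.1, hc.2, add_zero])
  · rintro (hp | hq)
    · have hq0 : q.coeff n = 0 := by
        by_contra hq0
        exact (Finset.disjoint_left.mp h (mem_support_iff.mpr hp))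
          (mem_support_iff.mpr hq0)
      simpa [hq0] using hp
    · have hp0 : p.coeff n = 0 := by
        by_contra hp0
        exact (Finset.disjoint_left.mp h (mem_support_iff.mpr hp0))
          (mem_support_iff.mpr hq)
      simpa [hp0] using hq

lemma card_expand_add (g h : (ZMod 2)[X]) (c : ℕ) (hc : ¬ 2 ∣ c) :
    (expand (ZMod 2) 2 g + X ^ c * expand (ZMod 2) 2 h).support.card
      = g.support.card + h.support.card := by
  have hdisj : Disjoint (expand (ZMod 2) 2 g).support
      (X ^ c * expand (ZMod 2) 2 h).support := by
    rw [Finset.disjoint_left]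
    intro n hng hnh
    rw [support_expand] at hng
    rw [support_X_pow_mul] at hnh
    simp only [Finset.mem_map, Function.Embedding.coeFn_mk, emb_mk_apply] at hng hnh
    obtain ⟨m, _, rfl⟩ := hng
    obtain ⟨m', hm', heq⟩ := hnh
    rw [support_expand] at hm'
    simp only [Finset.mem_map, Function.Embedding.coeFn_mk, emb_mk_apply] at hm'
    obtain ⟨m'', _, rfl⟩ := hm'
    omega
  rw [support_add_disjoint hdisj, Finset.card_union_of_disjoint hdisj,
    support_expand, support_X_pow_mul, support_expand]
  simp

lemma f_pow_odd (m : ℕ) :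
    (1 + X + X ^ 2 : (ZMod 2)[X]) ^ (2 * m + 1)
      = (1 + X + X ^ 2) * expand (ZMod 2) 2 ((1 + X + X ^ 2) ^ m) := by
  rw [pow_succ, mul_comm 2 m, pow_mul, sq_eq_expand, mul_comm]

lemma two_eq_zero : (2 : (ZMod 2)[X]) = 0 := by
  exact_mod_cast CharP.cast_eq_zero (ZMod 2)[X] 2

lemma hfactor : (1 + X) * (1 + X + X ^ 2 : (ZMod 2)[X]) = 1 + X ^ 3 := by
  linear_combination (X + X ^ 2 : (ZMod 2)[X]) * two_eq_zero

lemma a2_odd (m : ℕ) : a2 (2 * m + 1) = 2 * a1 m := by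
  unfold a1 a2
  have key : (1 + X) * (1 + X + X ^ 2 : (ZMod 2)[X]) ^ (2 * m + 1)
      = expand (ZMod 2) 2 ((1 + X + X ^ 2) ^ m)
        + X ^ 3 * expand (ZMod 2) 2 ((1 + X + X ^ 2) ^ m) := by
    rw [f_pow_odd, ← mul_assoc, hfactor, add_mul, one_mul]
  rw [key, card_expand_add _ _ 3 (by norm_num)]
  ring

lemma a1_odd (m : ℕ) : a1 (2 * m + 1) = a2 m + a1 m := by
  unfold a1 a2
  have hexp : expand (ZMod 2) 2 ((1 + X) * (1 + X + X ^ 2 : (ZMod 2)[X]) ^ m)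
      = (1 + X ^ 2) * expand (ZMod 2) 2 ((1 + X + X ^ 2) ^ m) := by
    rw [map_mul]
    congr 1
    simp [map_add]
  have key : (1 + X + X ^ 2 : (ZMod 2)[X]) ^ (2 * m + 1)
      = expand (ZMod 2) 2 ((1 + X) * (1 + X + X ^ 2) ^ m)
        + X ^ 1 * expand (ZMod 2) 2 ((1 + X + X ^ 2) ^ m) := by
    rw [f_pow_odd, hexp]
    ring
  rw [key, card_expand_add _ _ 1 (by norm_num)]

lemma a2_zero : a2 0 = 2 := by
  unfold a2
  have h1 : (1 + X : (ZMod 2)[X]) = C 1 * X ^ 0 + C 1 * X ^ 1 := by simp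
  rw [pow_zero, mul_one, h1,
    support_binomial (by norm_num) one_ne_zero one_ne_zero]
  rfl

lemma a2_one : a2 1 = 2 := by
  unfold a2
  have h1 : (1 + X ^ 3 : (ZMod 2)[X]) = C 1 * X ^ 0 + C 1 * X ^ 3 := by simp
  rw [pow_one, hfactor, h1,
    support_binomial (by norm_num) one_ne_zero one_ne_zero]
  rfl

lemma pow_sub_eq (k : ℕ) : 2 ^ (k + 1) - 1 = 2 * (2 ^ k - 1) + 1 := by
  have : 1 ≤ 2 ^ k := Nat.one_le_two_pow
  have : 2 ^ (k + 1) = 2 * 2 ^ k := by ring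
  omega

lemma b_rec (k : ℕ) :
    a2 (2 ^ (k + 2) - 1) = a2 (2 ^ (k + 1) - 1) + 2 * a2 (2 ^ k - 1) := by
  have h1 := a2_odd (2 ^ (k + 1) - 1)
  have h2 := a1_odd (2 ^ k - 1)
  have h3 := a2_odd (2 ^ k - 1)
  rw [pow_sub_eq (k + 1), h1, pow_sub_eq k, h2, h3]
  ring

lemma b_one : a2 (2 ^ 1 - 1) = 2 := a2_one

lemma b_zero : a2 (2 ^ 0 - 1) = 2 := a2_zero

end B2Aux

theorem b2_genfun :
    ((1 + PowerSeries.X) * (1 - 2 * PowerSeries.X)) *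
        PowerSeries.mk (fun k => (a2 (2 ^ k - 1) : ℤ)) =
      (2 : PowerSeries ℤ) := by
  set b : ℕ → ℤ := fun k => (a2 (2 ^ k - 1) : ℤ) with hb
  have hC2 : (2 : PowerSeries ℤ) = PowerSeries.C (R := ℤ) 2 :=
    (map_ofNat (PowerSeries.C (R := ℤ)) 2).symm
  have hLHS : ((1 + PowerSeries.X) * (1 - 2 * PowerSeries.X)) * PowerSeries.mk b
      = PowerSeries.mk b - PowerSeries.X * PowerSeries.mk b
        - PowerSeries.C (R := ℤ) 2 * (PowerSeries.X * (PowerSeries.X * PowerSeries.mk b)) := by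
    rw [← hC2]; ring
  rw [hLHS, hC2]
  ext n
  rcases n with _ | n
  · simp [hb, B2Aux.a2_zero, map_ofNat]
  rcases n with _ | n
  · have t1 : PowerSeries.coeff (R := ℤ) 1 (PowerSeries.X * PowerSeries.mk b) = b 0 := by
      have := PowerSeries.coeff_succ_X_mul (R := ℤ) 0 (PowerSeries.mk b)
      simpa using this
    have t2 : PowerSeries.coeff (R := ℤ) 1
        (PowerSeries.X * (PowerSeries.X * PowerSeries.mk b)) = 0 := by
      have := PowerSeries.coeff_succ_X_mul (R := ℤ) 0
        (PowerSeries.X * PowerSeries.mk b)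
      simp only [zero_add] at this
      rw [this, PowerSeries.coeff_zero_eq_constantCoeff, map_mul,
        PowerSeries.constantCoeff_X, zero_mul]
    have t3 : PowerSeries.coeff (R := ℤ) 1 (PowerSeries.C (R := ℤ) 2) = 0 := by
      rw [PowerSeries.coeff_C]; simp
    rw [map_sub, map_sub, PowerSeries.coeff_C_mul, PowerSeries.coeff_mk, t1, t2, t3]
    have h0 : b 0 = 2 := by simp [hb, B2Aux.a2_zero]
    have h1 : b 1 = 2 := by simp [hb, B2Aux.a2_one]
    rw [h0, h1]; ring
  · have hrec : (a2 (2 ^ (n + 2) - 1) : ℤ)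
        = a2 (2 ^ (n + 1) - 1) + 2 * a2 (2 ^ n - 1) := by
      exact_mod_cast B2Aux.b_rec n
    have t1 : PowerSeries.coeff (R := ℤ) (n + 1 + 1) (PowerSeries.X * PowerSeries.mk b)
        = b (n + 1) := by
      rw [PowerSeries.coeff_succ_X_mul, PowerSeries.coeff_mk]
    have t2 : PowerSeries.coeff (R := ℤ) (n + 1 + 1)
        (PowerSeries.X * (PowerSeries.X * PowerSeries.mk b)) = b n := by
      rw [PowerSeries.coeff_succ_X_mul, PowerSeries.coeff_succ_X_mul,
        PowerSeries.coeff_mk]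
    have t3 : PowerSeries.coeff (R := ℤ) (n + 1 + 1) (PowerSeries.C (R := ℤ) 2) = 0 := by
      rw [PowerSeries.coeff_C]; simp
    rw [map_sub, map_sub, PowerSeries.coeff_C_mul, PowerSeries.coeff_mk, t1, t2, t3]
    have : b (n + 1 + 1) = (a2 (2 ^ (n + 2) - 1) : ℤ) := by simp [hb]
    rw [this, hrec]
    simp only [hb]
    push_cast
    ring
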